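/- For every integer m ≥ 3 and every index l with 2 ≤ l ≤ m−1 there exists a constant C > 0 such that for every integer N ≥ 2, the sum over (m−1)-tuples of positive integers (j_1,…,j_{m−1}) with j_k ≤ N for all k and j_1 + ⋯ + j_{m−1} ≤ N of [1/(j_1 · j_l · ∏_{k=2, k≠l}^{m−1} j_k²)] · 1/(N − (j_1 + ⋯ + j_{m−1}) + 1) is at most C·ln N. -/

import Mathlib

set_option maxHeartbeats 1000000

lemma harm_aux (N : ℕ) : ∑ a ∈ Finset.Icc 1 N, 1/(a:ℝ) ≤ 1 + Real.log N := by
  have h := harmonic_le_one_add_log N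
  rw [harmonic_eq_sum_Icc] at h
  push_cast at h
  simpa [one_div] using h

lemma basel_aux (N : ℕ) : ∑ a ∈ Finset.Icc 1 N, 1/(a:ℝ)^2 ≤ 2 := by
  have key : ∀ M : ℕ, 1 ≤ M → ∑ a ∈ Finset.Icc 1 M, 1/(a:ℝ)^2 ≤ 2 - 1/(M:ℝ) := by
    intro M hM
    induction M, hM using Nat.le_induction with
    | base => norm_num
    | succ n hn ih =>
      rw [Finset.sum_Icc_succ_top (by omega)]
      have h1 : (1:ℝ) ≤ (n:ℝ) := by exact_mod_cast hn
      have h0 : (0:ℝ) < (n:ℝ) := by linarith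
      have h2 : (0:ℝ) < (n:ℝ) + 1 := by linarith
      have hstep : 1/((n:ℝ)+1)^2 ≤ 1/(n:ℝ) - 1/((n:ℝ)+1) := by
        rw [div_sub_div _ _ h0.ne' h2.ne', div_le_div_iff₀ (by positivity) (by positivity)]
        nlinarith
      push_cast
      linarith
  rcases Nat.eq_zero_or_pos N with h | h
  · simp [h]
  · have h2 := key N h
    have h3 : (0:ℝ) ≤ 1/(N:ℝ) := by positivity
    linarith

lemma core_aux (n : ℕ) (i0 il : Fin n) (hne : il ≠ i0) (N : ℕ) (hN : 2 ≤ N) :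
    ∑ j ∈ (Fintype.piFinset (fun _ : Fin n => Finset.Icc 1 N)).filter
        (fun j => ∑ k, j k ≤ N),
      (1 / ((j i0 : ℝ) * (j il : ℝ) *
          ∏ k ∈ (Finset.univ.erase i0).erase il, ((j k : ℝ)) ^ 2)) *
        (1 / ((N : ℝ) - ((∑ k, j k : ℕ) : ℝ) + 1))
    ≤ 3 * 2 ^ n * Real.log N := by
  classical
  have hn : 0 < n := i0.pos
  have hNR : (2:ℝ) ≤ (N:ℝ) := by exact_mod_cast hN
  set g : Fin n → ℕ → ℝ := fun k a => if k = i0 then 1 / (a:ℝ) else 1 / (a:ℝ)^2 with hgdef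
  set w : (Fin n → ℕ) → ℝ := fun j => ∏ k, g k (j k) with hwdef
  have hgnn : ∀ k a, 0 ≤ g k a := by
    intro k a
    simp only [hgdef]
    split <;> positivity
  have hwnn : ∀ j, 0 ≤ w j := fun j => Finset.prod_nonneg fun k _ => hgnn k (j k)
  have wformula : ∀ u : Fin n → ℕ,
      w u = 1/(u i0 : ℝ) * (1/(u il : ℝ)^2 *
        ∏ k ∈ (Finset.univ.erase i0).erase il, 1/(u k : ℝ)^2) := by
    intro u
    have h1 : w u = g i0 (u i0) * ∏ k ∈ Finset.univ.erase i0, g k (u k) := by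
      rw [hwdef]
      exact (Finset.mul_prod_erase Finset.univ _ (Finset.mem_univ i0)).symm
    have h2 : ∏ k ∈ Finset.univ.erase i0, g k (u k)
        = g il (u il) * ∏ k ∈ (Finset.univ.erase i0).erase il, g k (u k) :=
      (Finset.mul_prod_erase _ _ (Finset.mem_erase.mpr ⟨hne, Finset.mem_univ il⟩)).symm
    have h3 : ∀ k ∈ (Finset.univ.erase i0).erase il, g k (u k) = 1/(u k : ℝ)^2 := by
      intro k hk
      simp only [Finset.mem_erase] at hk
      simp [hgdef, hk.2.1]
    rw [h1, h2, Finset.prod_congr rfl h3]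
    simp [hgdef, hne]
  set P := Fintype.piFinset (fun _ : Fin n => Finset.Icc 1 N) with hPdef
  set S := P.filter (fun j => ∑ k, j k ≤ N) with hSdef
  set φ : (Fin n → ℕ) → (Fin n → ℕ) :=
    fun j => Function.update j il (N - ∑ k, j k + 1) with hφdef
  have memS : ∀ j ∈ S, (∀ k, 1 ≤ j k ∧ j k ≤ N) ∧ ∑ k, j k ≤ N := by
    intro j hj
    rw [hSdef, Finset.mem_filter, hPdef, Fintype.mem_piFinset] at hj
    exact ⟨fun k => Finset.mem_Icc.mp (hj.1 k), hj.2⟩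
  have sum_ge : ∀ j : Fin n → ℕ, (∀ k, 1 ≤ j k) → 1 ≤ ∑ k, j k := by
    intro j hj
    calc 1 ≤ j i0 := hj i0
    _ ≤ ∑ k, j k := Finset.single_le_sum (fun k _ => Nat.zero_le _) (Finset.mem_univ i0)
  -- step 1 : termwise bound
  have step1 : ∀ j ∈ S,
      (1 / ((j i0 : ℝ) * (j il : ℝ) *
          ∏ k ∈ (Finset.univ.erase i0).erase il, ((j k : ℝ)) ^ 2)) *
        (1 / ((N : ℝ) - ((∑ k, j k : ℕ) : ℝ) + 1)) ≤ w j + w (φ j) := by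
    intro j hj
    obtain ⟨hj1, hjs⟩ := memS j hj
    have hb : (1:ℝ) ≤ (j i0 : ℝ) := by exact_mod_cast (hj1 i0).1
    have ha : (1:ℝ) ≤ (j il : ℝ) := by exact_mod_cast (hj1 il).1
    have htnat : ((N - ∑ k, j k + 1 : ℕ) : ℝ) = (N : ℝ) - ((∑ k, j k : ℕ) : ℝ) + 1 := by
      push_cast [Nat.cast_sub hjs]
      ring
    set t : ℝ := (N : ℝ) - ((∑ k, j k : ℕ) : ℝ) + 1 with htdef
    have hsle : ((∑ k, j k : ℕ) : ℝ) ≤ (N:ℝ) := by exact_mod_cast hjs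
    have ht : (1:ℝ) ≤ t := by rw [htdef]; linarith
    set A : ℝ := ∏ k ∈ (Finset.univ.erase i0).erase il, ((j k : ℝ))^2 with hAdef
    have hA : (0:ℝ) < A := by
      rw [hAdef]
      apply Finset.prod_pos
      intro k hk
      have : (1:ℝ) ≤ (j k : ℝ) := by exact_mod_cast (hj1 k).1
      positivity
    have hBA : ∏ k ∈ (Finset.univ.erase i0).erase il, 1/((j k : ℝ))^2 = 1/A := by
      rw [hAdef]
      simp [one_div, ← Finset.prod_inv_distrib]
    have hwj : w j = 1/(j i0 : ℝ) * (1/(j il : ℝ)^2 * (1/A)) := by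
      rw [wformula j, hBA]
    have hwφ : w (φ j) = 1/(j i0 : ℝ) * (1/t^2 * (1/A)) := by
      rw [wformula (φ j)]
      have e0 : φ j i0 = j i0 := Function.update_of_ne (Ne.symm hne) _ _
      have el : φ j il = N - ∑ k, j k + 1 := Function.update_self _ _ _
      have eT : ∏ k ∈ (Finset.univ.erase i0).erase il, 1/((φ j k : ℝ))^2
          = ∏ k ∈ (Finset.univ.erase i0).erase il, 1/((j k : ℝ))^2 := by
        apply Finset.prod_congr rfl
        intro k hk
        have hkil : k ≠ il := (Finset.mem_erase.mp hk).1
        rw [hφdef]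
        simp [Function.update_of_ne hkil]
      rw [e0, el, eT, htnat, hBA]
    have hb0 : (0:ℝ) < (j i0 : ℝ) := by linarith
    have ha0 : (0:ℝ) < (j il : ℝ) := by linarith
    have ht0 : (0:ℝ) < t := by linarith
    have core : 1/((j il : ℝ) * t) ≤ 1/(j il : ℝ)^2 + 1/t^2 := by
      rw [div_add_div _ _ (by positivity) (by positivity),
        div_le_div_iff₀ (by positivity) (by positivity)]
      nlinarith [sq_nonneg ((j il : ℝ) - t), mul_pos ha0 ht0]
    have lhs_eq : 1 / ((j i0 : ℝ) * (j il : ℝ) * A) * (1/t)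
        = (1/((j i0:ℝ) * A)) * (1/((j il : ℝ) * t)) := by
      field_simp
    have rhs_eq : w j + w (φ j) = (1/((j i0:ℝ) * A)) * (1/(j il : ℝ)^2 + 1/t^2) := by
      rw [hwj, hwφ]
      field_simp
    calc 1 / ((j i0 : ℝ) * (j il : ℝ) * A) * (1/t)
        = (1/((j i0:ℝ) * A)) * (1/((j il : ℝ) * t)) := lhs_eq
      _ ≤ (1/((j i0:ℝ) * A)) * (1/(j il : ℝ)^2 + 1/t^2) :=
          mul_le_mul_of_nonneg_left core (by positivity)
      _ = w j + w (φ j) := rhs_eq.symm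
  -- step 2 : φ maps S injectively into P
  have φmem : ∀ j ∈ S, φ j ∈ P := by
    intro j hj
    obtain ⟨hj1, hjs⟩ := memS j hj
    have hS1 : 1 ≤ ∑ k, j k := sum_ge j fun k => (hj1 k).1
    rw [hPdef, Fintype.mem_piFinset]
    intro k
    rw [Finset.mem_Icc]
    by_cases hk : k = il
    · subst hk
      rw [hφdef]
      simp only [Function.update_self]
      omega
    · rw [hφdef]
      simp only [Function.update_of_ne hk]
      exact ⟨(hj1 k).1, (hj1 k).2⟩
  have φinj : ∀ j ∈ S, ∀ j' ∈ S, φ j = φ j' → j = j' := by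
    intro j hj j' hj' heq
    obtain ⟨hj1, hjs⟩ := memS j hj
    obtain ⟨hj1', hjs'⟩ := memS j' hj'
    have hoff : ∀ k, k ≠ il → j k = j' k := by
      intro k hk
      have h := congrFun heq k
      simpa only [hφdef, Function.update_of_ne hk] using h
    have hsum : ∑ k, j k = ∑ k, j' k := by
      have h := congrFun heq il
      simp only [hφdef, Function.update_self] at h
      omega
    have hil : j il = j' il := by
      have e1 : ∑ k, j k = j il + ∑ k ∈ Finset.univ.erase il, j k :=
        (Finset.add_sum_erase _ _ (Finset.mem_univ il)).symm
      have e2 : ∑ k, j' k = j' il + ∑ k ∈ Finset.univ.erase il, j' k :=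
        (Finset.add_sum_erase _ _ (Finset.mem_univ il)).symm
      have e3 : ∑ k ∈ Finset.univ.erase il, j k = ∑ k ∈ Finset.univ.erase il, j' k :=
        Finset.sum_congr rfl fun k hk => hoff k (Finset.mem_erase.mp hk).1
      omega
    funext k
    by_cases hk : k = il
    · subst hk; exact hil
    · exact hoff k hk
  -- step 3 : factor the unconstrained sum
  have sumW : ∑ j ∈ P, w j ≤ (1 + Real.log N) * 2 ^ (n - 1) := by
    have hfact : ∑ j ∈ P, w j = ∏ k : Fin n, ∑ a ∈ Finset.Icc 1 N, g k a := by
      rw [hPdef, hwdef]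
      exact (Finset.prod_univ_sum _ _).symm
    rw [hfact, ← Finset.mul_prod_erase Finset.univ _ (Finset.mem_univ i0)]
    have h0 : ∑ a ∈ Finset.Icc 1 N, g i0 a ≤ 1 + Real.log N := by
      simp only [hgdef, if_pos rfl]
      exact harm_aux N
    have hrest : ∏ k ∈ Finset.univ.erase i0, (∑ a ∈ Finset.Icc 1 N, g k a)
        ≤ 2 ^ (n - 1) := by
      have hcard : (Finset.univ.erase i0).card = n - 1 := by
        rw [Finset.card_erase_of_mem (Finset.mem_univ i0)]
        simp
      calc ∏ k ∈ Finset.univ.erase i0, (∑ a ∈ Finset.Icc 1 N, g k a)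
          ≤ ∏ _k ∈ Finset.univ.erase i0, (2:ℝ) := by
            apply Finset.prod_le_prod
            · intro k _; exact Finset.sum_nonneg fun a _ => hgnn k a
            · intro k hk
              have hki0 : k ≠ i0 := (Finset.mem_erase.mp hk).1
              have heq : ∀ a ∈ Finset.Icc 1 N, g k a = 1/(a:ℝ)^2 := by
                intro a _; simp [hgdef, hki0]
              rw [Finset.sum_congr rfl heq]
              exact basel_aux N
        _ = 2 ^ (n - 1) := by rw [Finset.prod_const, hcard]
    have hrestnn : 0 ≤ ∏ k ∈ Finset.univ.erase i0, (∑ a ∈ Finset.Icc 1 N, g k a) :=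
      Finset.prod_nonneg fun k _ => Finset.sum_nonneg fun a _ => hgnn k a
    have hlog : (0:ℝ) ≤ 1 + Real.log N := by
      have : (0:ℝ) ≤ Real.log N := Real.log_nonneg (by linarith)
      linarith
    exact mul_le_mul h0 hrest hrestnn hlog
  -- combine
  have total : ∑ j ∈ S,
      (1 / ((j i0 : ℝ) * (j il : ℝ) *
          ∏ k ∈ (Finset.univ.erase i0).erase il, ((j k : ℝ)) ^ 2)) *
        (1 / ((N : ℝ) - ((∑ k, j k : ℕ) : ℝ) + 1))
      ≤ 2 * ((1 + Real.log N) * 2 ^ (n - 1)) := by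
    have c1 : ∑ j ∈ S, w j ≤ ∑ j ∈ P, w j := by
      apply Finset.sum_le_sum_of_subset_of_nonneg (Finset.filter_subset _ _)
      intro j _ _; exact hwnn j
    have c2 : ∑ j ∈ S, w (φ j) ≤ ∑ j ∈ P, w j := by
      rw [← Finset.sum_image φinj]
      apply Finset.sum_le_sum_of_subset_of_nonneg
      · intro x hx
        obtain ⟨j, hj, rfl⟩ := Finset.mem_image.mp hx
        exact φmem j hj
      · intro j _ _; exact hwnn j
    calc ∑ j ∈ S, (1 / ((j i0 : ℝ) * (j il : ℝ) *
            ∏ k ∈ (Finset.univ.erase i0).erase il, ((j k : ℝ)) ^ 2)) *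
          (1 / ((N : ℝ) - ((∑ k, j k : ℕ) : ℝ) + 1))
        ≤ ∑ j ∈ S, (w j + w (φ j)) := Finset.sum_le_sum step1
      _ = ∑ j ∈ S, w j + ∑ j ∈ S, w (φ j) := Finset.sum_add_distrib
      _ ≤ 2 * ((1 + Real.log N) * 2 ^ (n - 1)) := by linarith
  refine total.trans ?_
  have hlog2 : (1:ℝ)/2 ≤ Real.log N := by
    have h1 : Real.log 2 ≤ Real.log N := Real.log_le_log (by norm_num) hNR
    have h2 : (1:ℝ)/2 < Real.log 2 := by
      have := Real.log_two_gt_d9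
      linarith
    linarith
  have hpownn : (0:ℝ) < 2 ^ (n - 1) := by positivity
  have hpow : (2:ℝ) * 2 ^ (n - 1) = 2 ^ n := by
    conv_rhs => rw [show n = (n - 1) + 1 by omega]
    rw [pow_succ]
    ring
  have hlogpos : (0:ℝ) < Real.log N := by linarith
  calc 2 * ((1 + Real.log N) * 2 ^ (n - 1))
      ≤ 2 * ((3 * Real.log N) * 2 ^ (n - 1)) := by nlinarith
    _ = 3 * Real.log N * (2 * 2 ^ (n - 1)) := by ring
    _ = 3 * 2 ^ n * Real.log N := by rw [hpow]; ring

/-- For every `m ≥ 3` and every index `l` with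
`2 ≤ l ≤ m - 1` there is `C > 0` such that for every `N ≥ 2`, the sum over
`(m-1)`-tuples of positive integers `(j_1,…,j_{m-1})` with `j_k ≤ N` and
`j_1 + ⋯ + j_{m-1} ≤ N` of
`(1/(j_1 j_l ∏_{k=2, k≠l}^{m-1} j_k²)) · 1/(N - (j_1 + ⋯ + j_{m-1}) + 1)`
is at most `C ln N`.  (Indices are `1`-based in the informal statement; here
`j_r` is `j ⟨r - 1, _⟩`.) -/
theorem sum_tail_weight_two_first_powers_le (m : ℕ) (hm : 3 ≤ m)
    (l : ℕ) (hl2 : 2 ≤ l) (hlm : l ≤ m - 1) :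
    ∃ C : ℝ, 0 < C ∧ ∀ N : ℕ, 2 ≤ N →
      ∑ j ∈ (Fintype.piFinset (fun _ : Fin (m - 1) => Finset.Icc 1 N)).filter
          (fun j => ∑ k, j k ≤ N),
        (1 / ((j ⟨0, by omega⟩ : ℝ) * (j ⟨l - 1, by omega⟩ : ℝ) *
            ∏ k ∈ Finset.univ.filter
              (fun k : Fin (m - 1) => 1 ≤ (k : ℕ) ∧ (k : ℕ) ≠ l - 1),
              ((j k : ℝ)) ^ 2)) *
          (1 / ((N : ℝ) - ((∑ k, j k : ℕ) : ℝ) + 1))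
      ≤ C * Real.log N := by
  refine ⟨3 * 2 ^ (m - 1), by positivity, fun N hN => ?_⟩
  have hne : (⟨l - 1, by omega⟩ : Fin (m - 1)) ≠ ⟨0, by omega⟩ := by
    simp only [ne_eq, Fin.mk.injEq]
    omega
  have hT : Finset.univ.filter (fun k : Fin (m - 1) => 1 ≤ (k : ℕ) ∧ (k : ℕ) ≠ l - 1)
      = (Finset.univ.erase (⟨0, by omega⟩ : Fin (m - 1))).erase ⟨l - 1, by omega⟩ := by
    ext k
    simp only [Finset.mem_filter, Finset.mem_univ, true_and, Finset.mem_erase, ne_eq,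
      Fin.ext_iff, and_true]
    omega
  rw [hT]
  exact core_aux (m - 1) ⟨0, by omega⟩ ⟨l - 1, by omega⟩ hne N hN
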